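/- Let k be an integer with k > 1 and let b₁ ∈ Ab. Then the centralizer of b₁ in the group G = ℤ[1/k] ⋊ ℤ equals the cyclic subgroup ⟨b₁⟩ = {b₁^{m} : m ∈ ℤ} generated by b₁. -/

import Mathlib

/-- The subring `ℤ[1/k] = {z·k^i : z, i ∈ ℤ}` of `ℚ`, as a set. -/
def zkSet (k : ℤ) : Set ℚ := {q | ∃ z i : ℤ, q = (z : ℚ) * (k : ℚ) ^ i}

theorem zkSet_neg {k : ℤ} {q : ℚ} (hq : q ∈ zkSet k) : -q ∈ zkSet k := by
  obtain ⟨z, i, rfl⟩ := hq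
  exact ⟨-z, i, by push_cast; ring⟩

theorem zkSet_mul_zpow {k : ℤ} (hk : (k : ℚ) ≠ 0) {q : ℚ} (hq : q ∈ zkSet k) (j : ℤ) :
    q * (k : ℚ) ^ j ∈ zkSet k := by
  obtain ⟨z, i, rfl⟩ := hq
  exact ⟨z, i + j, by rw [zpow_add₀ hk]; ring⟩

theorem zkSet_add {k : ℤ} (hk : (k : ℚ) ≠ 0) {p q : ℚ}
    (hp : p ∈ zkSet k) (hq : q ∈ zkSet k) : p + q ∈ zkSet k := by
  obtain ⟨z₁, i₁, rfl⟩ := hp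
  obtain ⟨z₂, i₂, rfl⟩ := hq
  rcases le_total i₁ i₂ with h | h
  · refine ⟨z₁ + z₂ * k ^ (i₂ - i₁).toNat, i₁, ?_⟩
    have hpow : ((k : ℚ)) ^ ((i₂ - i₁).toNat) = (k : ℚ) ^ (i₂ - i₁) := by
      rw [← zpow_natCast, Int.toNat_of_nonneg (by omega)]
    push_cast
    rw [hpow]
    have e : (k : ℚ) ^ (i₂ - i₁) * (k : ℚ) ^ i₁ = (k : ℚ) ^ i₂ := by
      rw [← zpow_add₀ hk, show i₂ - i₁ + i₁ = i₂ from by omega]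
    linear_combination (-(z₂ : ℚ)) * e
  · refine ⟨z₂ + z₁ * k ^ (i₁ - i₂).toNat, i₂, ?_⟩
    have hpow : ((k : ℚ)) ^ ((i₁ - i₂).toNat) = (k : ℚ) ^ (i₁ - i₂) := by
      rw [← zpow_natCast, Int.toNat_of_nonneg (by omega)]
    push_cast
    rw [hpow]
    have e : (k : ℚ) ^ (i₁ - i₂) * (k : ℚ) ^ i₂ = (k : ℚ) ^ i₁ := by
      rw [← zpow_add₀ hk, show i₁ - i₂ + i₂ = i₁ from by omega]
    linear_combination (-(z₁ : ℚ)) * e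

/-- The underlying set of the semidirect product `G = ℤ[1/k] ⋊ ℤ` (modelled inside
`ℚ × ℤ`): pairs `(y, m)` with multiplication `(y₁,m₁)(y₂,m₂) = (y₁ + y₂·k^{-m₁}, m₁+m₂)`. -/
@[ext]
structure BSQ (k : ℤ) : Type where
  y : ℚ
  m : ℤ

namespace BSQ

variable {k : ℤ}

instance : Mul (BSQ k) := ⟨fun g h => ⟨g.y + h.y * (k : ℚ) ^ (-g.m), g.m + h.m⟩⟩
instance : One (BSQ k) := ⟨⟨0, 0⟩⟩
instance : Inv (BSQ k) := ⟨fun g => ⟨-g.y * (k : ℚ) ^ g.m, -g.m⟩⟩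

@[simp] theorem mul_y (g h : BSQ k) : (g * h).y = g.y + h.y * (k : ℚ) ^ (-g.m) := rfl
@[simp] theorem mul_m (g h : BSQ k) : (g * h).m = g.m + h.m := rfl
@[simp] theorem one_y : (1 : BSQ k).y = 0 := rfl
@[simp] theorem one_m : (1 : BSQ k).m = 0 := rfl
@[simp] theorem inv_y (g : BSQ k) : g⁻¹.y = -g.y * (k : ℚ) ^ g.m := rfl
@[simp] theorem inv_m (g : BSQ k) : g⁻¹.m = -g.m := rfl

theorem kq_ne_zero [Fact (1 < k)] : (k : ℚ) ≠ 0 := by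
  have h : (1 : ℤ) < k := Fact.out
  have h' : (k : ℤ) ≠ 0 := by omega
  exact_mod_cast h'

private theorem mul_assoc' [Fact (1 < k)] (a b c : BSQ k) : a * b * c = a * (b * c) := by
  ext
  · simp only [mul_y, mul_m, neg_add, zpow_add₀ (kq_ne_zero (k := k))]
    ring
  · simp only [mul_m]
    ring

private theorem one_mul' [Fact (1 < k)] (a : BSQ k) : 1 * a = a := by
  ext <;> simp

private theorem mul_one' [Fact (1 < k)] (a : BSQ k) : a * 1 = a := by
  ext <;> simp

private theorem inv_mul_cancel' [Fact (1 < k)] (a : BSQ k) : a⁻¹ * a = 1 := by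
  ext
  · simp only [mul_y, inv_y, inv_m, one_y, neg_neg]
    ring
  · simp only [mul_m, inv_m, one_m]
    ring

/-- The group structure on `ℤ[1/k] ⋊ ℤ` (here on the ambient `ℚ ⋊ ℤ`). -/
instance [Fact (1 < k)] : Group (BSQ k) where
  mul := (· * ·)
  one := 1
  inv := Inv.inv
  mul_assoc := mul_assoc'
  one_mul := one_mul'
  mul_one := mul_one'
  inv_mul_cancel := inv_mul_cancel'

end BSQ

/-- The group `G = ℤ[1/k] ⋊ ℤ`, as the subgroup of `ℚ ⋊ ℤ` of pairs whose first
coordinate lies in `ℤ[1/k]`. -/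
def bsSubgroup (k : ℤ) [Fact (1 < k)] : Subgroup (BSQ k) where
  carrier := {g | g.y ∈ zkSet k}
  one_mem' := ⟨0, 0, by norm_num⟩
  mul_mem' := by
    intro a b ha hb
    exact zkSet_add BSQ.kq_ne_zero ha (zkSet_mul_zpow BSQ.kq_ne_zero hb _)
  inv_mem' := by
    intro a ha
    exact zkSet_mul_zpow BSQ.kq_ne_zero (zkSet_neg ha) _

theorem mem_bsSubgroup {k : ℤ} [Fact (1 < k)] {g : BSQ k} (h : g.y ∈ zkSet k) :
    g ∈ bsSubgroup k := h


theorem BSQ.b_zpow {k : ℤ} [Fact (1 < k)] (y : ℚ) (n : ℤ) :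
    (⟨y, 1⟩ : BSQ k) ^ n = ⟨y * (1 - (k : ℚ) ^ (-n)) / (1 - (k : ℚ)⁻¹), n⟩ := by
  have hk : (k : ℚ) ≠ 0 := BSQ.kq_ne_zero
  have hk1 : (k : ℚ) ≠ 1 := by
    have h1 : (1 : ℤ) < k := Fact.out
    exact_mod_cast (by omega : k ≠ 1)
  have hc : (1 : ℚ) - (k : ℚ)⁻¹ ≠ 0 := by
    rw [sub_ne_zero]
    intro h
    exact hk1 (inv_eq_one.mp h.symm)
  induction n using Int.induction_on with
  | zero => ext <;> simp
  | succ n ih =>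
    rw [zpow_add_one, ih]
    ext
    · show y * (1 - (k : ℚ) ^ (-(n : ℤ))) / (1 - (k : ℚ)⁻¹) + y * (k : ℚ) ^ (-(n : ℤ)) =
        y * (1 - (k : ℚ) ^ (-((n : ℤ) + 1))) / (1 - (k : ℚ)⁻¹)
      have e2 : (k : ℚ) ^ (-((n : ℤ) + 1)) = (k : ℚ) ^ (-(n : ℤ)) * (k : ℚ)⁻¹ := by
        rw [show (-((n : ℤ) + 1)) = (-(n : ℤ)) + (-1) from by ring, zpow_add₀ hk, zpow_neg_one]
      rw [div_add' _ _ _ hc, div_eq_div_iff hc hc]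
      linear_combination ((1 - (k : ℚ)⁻¹) * y) * e2
    · rfl
  | pred n ih =>
    have h1 : (-(n : ℤ) - 1) = (-(n : ℤ)) - 1 := by ring
    rw [h1, zpow_sub_one, ih]
    ext
    · show y * (1 - (k : ℚ) ^ (-(-(n : ℤ)))) / (1 - (k : ℚ)⁻¹) +
          (-y * (k : ℚ) ^ (1 : ℤ)) * (k : ℚ) ^ (-(-(n : ℤ))) =
        y * (1 - (k : ℚ) ^ (-(-(n : ℤ) - 1))) / (1 - (k : ℚ)⁻¹)
      have e2 : (k : ℚ) ^ (-(-(n : ℤ) - 1)) = (k : ℚ) ^ (- -(n : ℤ)) * (k : ℚ) := by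
        rw [show (-(-(n : ℤ) - 1)) = (- -(n : ℤ)) + 1 from by ring, zpow_add₀ hk, zpow_one]
      have ekinv : (k : ℚ) * (k : ℚ)⁻¹ = 1 := mul_inv_cancel₀ hk
      rw [div_add' _ _ _ hc, div_eq_div_iff hc hc]
      simp only [zpow_one]
      linear_combination ((1 - (k : ℚ)⁻¹) * y) * e2 + ((1 - (k : ℚ)⁻¹) * y * (k : ℚ) ^ (- -(n : ℤ))) * ekinv
    · rfl

/-- **Corollary (centralizer).** For `b₁ = (y,1) ∈ Ab`, the centralizer of `b₁` in
`G = ℤ[1/k] ⋊ ℤ` is the cyclic subgroup `⟨b₁⟩ = {b₁^m : m ∈ ℤ}`. -/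
theorem centralizer_eq_zpowers (k : ℤ) [Fact (1 < k)] (y : ℚ) (hy : y ∈ zkSet k) :
    Subgroup.centralizer
        ({⟨⟨y, 1⟩, mem_bsSubgroup hy⟩} : Set ↥(bsSubgroup k)) =
      Subgroup.zpowers (⟨⟨y, 1⟩, mem_bsSubgroup hy⟩ : ↥(bsSubgroup k)) := by
  have hk : (k : ℚ) ≠ 0 := BSQ.kq_ne_zero
  have hk1 : (k : ℚ) ≠ 1 := by
    have h1 : (1 : ℤ) < k := Fact.out
    exact_mod_cast (by omega : k ≠ 1)
  have hc : (1 : ℚ) - (k : ℚ)⁻¹ ≠ 0 := by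
    rw [sub_ne_zero]
    intro h
    exact hk1 (inv_eq_one.mp h.symm)
  set b : ↥(bsSubgroup k) := ⟨⟨y, 1⟩, mem_bsSubgroup hy⟩ with hb
  ext g
  rw [Subgroup.mem_centralizer_iff]
  constructor
  · intro hg
    have hcomm : b * g = g * b := hg b (Set.mem_singleton _)
    have hcoe : (b : BSQ k) * (g : BSQ k) = (g : BSQ k) * (b : BSQ k) := by
      exact_mod_cast congrArg Subtype.val hcomm
    have hyeq := congrArg BSQ.y hcoe
    simp only [BSQ.mul_y] at hyeq
    rw [Subgroup.mem_zpowers_iff]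
    refine ⟨(g : BSQ k).m, ?_⟩
    apply Subtype.ext
    rw [SubgroupClass.coe_zpow]
    rw [show ((b : BSQ k)) = (⟨y, 1⟩ : BSQ k) from rfl, BSQ.b_zpow]
    ext
    · show y * (1 - (k : ℚ) ^ (-(g : BSQ k).m)) / (1 - (k : ℚ)⁻¹) = (g : BSQ k).y
      rw [show ((k : ℚ) ^ (-1 : ℤ)) = (k : ℚ)⁻¹ from zpow_neg_one (k : ℚ)] at hyeq
      rw [div_eq_iff hc]
      linear_combination hyeq
    · rfl
  · rintro ⟨n, rfl⟩ h hh
    rw [Set.mem_singleton_iff] at hh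
    subst hh
    show b * b ^ n = b ^ n * b
    exact (Commute.refl b).zpow_right n
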